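/- In the poset-enriched 2-category Par of sets and partial functions, both the empty set ∅ and the singleton set * are rali-terminal objects (for each set A, the poset Par(A, ∅) and the poset Par(A, *) each have a greatest element), yet ∅ and * are not equivalent objects of Par. Consequently rali-limits are not unique up to equivalence. -/

import Mathlib

open CategoryTheory

/-- The hom-order of the poset-enriched 2-category `Par` of sets and partial functions:
`f ≤ g` iff whenever `f` is defined at `a` (with value `b`), so is `g` with the same value. -/
def ParLe {A B : Type} (f g : A →. B) : Prop :=
  ∀ (a : A) (b : B), b ∈ f a → b ∈ g a

/-- in `Par`, both `∅` and the singleton `*` are rali-terminal (each hom-poset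
`Par(A, ∅)` and `Par(A, *)` has a greatest element), yet `∅` and `*` are not equivalent
objects of `Par` (equivalence in a poset-enriched 2-category forces isomorphism, i.e. mutually
inverse 1-cells).  Consequently rali-limits are not unique up to equivalence. -/
theorem par_rali_terminal_not_unique :
    -- `∅` is rali-terminal
    (∀ A : Type, ∃ t : A →. Empty, ∀ f : A →. Empty, ParLe f t) ∧
    -- `*` is rali-terminal
    (∀ A : Type, ∃ t : A →. Unit, ∀ f : A →. Unit, ParLe f t) ∧
    -- `∅` and `*` are not equivalent (not isomorphic) in `Par`
    ¬ ∃ (u : ((Empty : Type) →. Unit)) (v : ((Unit : Type) →. Empty)),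
        (v.comp u = PFun.id Empty ∧ u.comp v = PFun.id Unit) := by
  refine ⟨fun A => ⟨fun _ => Part.none, fun f a b _ => b.elim⟩,
    fun A => ⟨fun _ => Part.some (), fun f a b _ => by
      simp [Part.mem_some_iff]⟩, ?_⟩
  rintro ⟨u, v, -, huv⟩
  have h : () ∈ (u.comp v) () := by rw [huv]; simp [PFun.id]
  rw [PFun.comp_apply] at h; replace h := Part.mem_bind_iff.mp h
  obtain ⟨c, -, -⟩ := h
  exact c.elim
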